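/- Let y and Z be jointly distributed discrete random variables on a common probability space, where y takes values in a finite set 𝒴 and Z takes values in a finite set. Then ∑_z P(Z=z) · ( 1 − max_{i ∈ 𝒴} P(y = i | Z = z) ) ≤ (1/2) · H(y | Z), the sum ranging over z with P(Z=z) > 0; that is, the Bayes error of predicting y from Z is at most half the conditional entropy of y given Z. -/

import Mathlib

/-!  Self-contained finite-probability setup.

A finite probability space is given by a mass function `μ : Ω → ℝ` on a `Fintype Ω`
with `∀ ω, 0 ≤ μ ω` and `∑ ω, μ ω = 1`.  All logarithms are base 2; the conventions
`0 · log₂ 0 = 0` and `x / 0 = 0` agree with Lean's `Real.logb 2 0 = 0` and division. -/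

-- Probability of the event `{ω | p ω}` under the mass function `μ`.
open Classical in
noncomputable def pr {Ω : Type*} [Fintype Ω] (μ : Ω → ℝ) (p : Ω → Prop) : ℝ :=
  ∑ ω, if p ω then μ ω else 0

/-- Shannon entropy (base 2) of the discrete random variable `X`. -/
noncomputable def entropy {Ω α : Type*} [Fintype Ω] [Fintype α]
    (μ : Ω → ℝ) (X : Ω → α) : ℝ :=
  -∑ a, pr μ (fun ω => X ω = a) * Real.logb 2 (pr μ (fun ω => X ω = a))

/-- Conditional entropy `H(X | Y) = ∑_b P(Y = b) · H(X | Y = b)`, where the conditional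
distribution is `P(X = a | Y = b) = P(X = a ∧ Y = b) / P(Y = b)`. -/
noncomputable def condEntropy {Ω α β : Type*} [Fintype Ω] [Fintype α] [Fintype β]
    (μ : Ω → ℝ) (X : Ω → α) (Y : Ω → β) : ℝ :=
  ∑ b, pr μ (fun ω => Y ω = b) *
    (-∑ a,
      (pr μ (fun ω => X ω = a ∧ Y ω = b) / pr μ (fun ω => Y ω = b)) *
        Real.logb 2 (pr μ (fun ω => X ω = a ∧ Y ω = b) / pr μ (fun ω => Y ω = b)))

/-- Mutual information `I(X ; Y) = H(X) − H(X | Y)`. -/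
noncomputable def mutualInfo {Ω α β : Type*} [Fintype Ω] [Fintype α] [Fintype β]
    (μ : Ω → ℝ) (X : Ω → α) (Y : Ω → β) : ℝ :=
  entropy μ X - condEntropy μ X Y

/-- Conditional mutual information `I(X ; Y | Z) = H(X | Z) − H(X | (Y, Z))`. -/
noncomputable def condMutualInfo {Ω α β γ : Type*}
    [Fintype Ω] [Fintype α] [Fintype β] [Fintype γ]
    (μ : Ω → ℝ) (X : Ω → α) (Y : Ω → β) (Z : Ω → γ) : ℝ :=
  condEntropy μ X Z - condEntropy μ X (fun ω => (Y ω, Z ω))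

/-- Binary entropy function `H_b(p) = −p log₂ p − (1 − p) log₂ (1 − p)`. -/
noncomputable def binEntropy (p : ℝ) : ℝ :=
  -(p * Real.logb 2 p) - (1 - p) * Real.logb 2 (1 - p)

/- STATEMENT 7: for jointly distributed discrete random variables `y` (values in a finite
set `𝒴`) and `Z` (values in a finite set), the Bayes error of predicting `y` from `Z`,
`∑_{z : P(Z=z) > 0} P(Z = z) · (1 − max_{i ∈ 𝒴} P(y = i | Z = z))`,
is at most `(1/2) · H(y | Z)`.  (`𝒴` is nonempty since `y` takes values in it and the total
mass is `1`.) -/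

private lemma lemA {q : ℝ} (h1 : 1/2 ≤ q) (h2 : q ≤ 1) :
    2 * (1 - q) * Real.log 2 ≤ Real.binEntropy q := by
  have hc := Real.strictConcave_binEntropy.concaveOn
  have h := hc.2 (show (2:ℝ)⁻¹ ∈ Set.Icc (0:ℝ) 1 by norm_num)
    (show (1:ℝ) ∈ Set.Icc (0:ℝ) 1 by norm_num)
    (show (0:ℝ) ≤ 2*(1-q) by linarith) (show (0:ℝ) ≤ 2*q-1 by linarith)
    (show 2*(1-q) + (2*q-1) = 1 by ring)
  have harg : (2*(1-q)) • (2:ℝ)⁻¹ + (2*q-1) • (1:ℝ) = q := by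
    simp [smul_eq_mul]; ring
  rw [harg] at h
  simpa [Real.binEntropy_two_inv, Real.binEntropy_one, smul_eq_mul] using h

private lemma lemA' {q : ℝ} (h1 : 1/2 ≤ q) (h2 : q ≤ 1) :
    2 * (1 - q) ≤ -(q * Real.logb 2 q) - (1 - q) * Real.logb 2 (1 - q) := by
  have hl2 : (0:ℝ) < Real.log 2 := Real.log_pos (by norm_num)
  have hA := lemA h1 h2
  rw [Real.binEntropy, Real.log_inv, Real.log_inv] at hA
  rw [Real.logb, Real.logb, ← mul_le_mul_iff_of_pos_right hl2]
  have e : (-(q * (Real.log q / Real.log 2)) - (1-q) * (Real.log (1-q) / Real.log 2)) * Real.log 2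
      = q * (-Real.log q) + (1-q) * (-Real.log (1-q)) := by
    field_simp
    ring
  rw [e]
  exact hA

private lemma lemB {q : ℝ} (h0 : 0 < q) (h1 : q ≤ 1/2) :
    2 * (1 - q) ≤ -Real.logb 2 q := by
  have hl2 : (0:ℝ) < Real.log 2 := Real.log_pos (by norm_num)
  have hl2' : Real.log 2 ≤ 1 := by
    nlinarith [Real.log_le_sub_one_of_pos (show (0:ℝ) < 2 by norm_num)]
  have h2q : Real.log (2*q) ≤ 2*q - 1 := Real.log_le_sub_one_of_pos (by linarith)
  rw [Real.log_mul (by norm_num) h0.ne'] at h2q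
  rw [Real.logb, ← mul_le_mul_iff_of_pos_right hl2]
  have e : -(Real.log q / Real.log 2) * Real.log 2 = -Real.log q := by
    field_simp
  rw [e]
  nlinarith

private lemma key {𝒴 : Type*} [Fintype 𝒴] [DecidableEq 𝒴] [Nonempty 𝒴] (p : 𝒴 → ℝ)
    (hp : ∀ i, 0 ≤ p i) (hs : ∑ i, p i = 1) :
    1 - Finset.univ.sup' Finset.univ_nonempty p ≤
      (1/2) * (-∑ i, p i * Real.logb 2 (p i)) := by
  obtain ⟨i₀, -, hi₀⟩ := Finset.exists_mem_eq_sup' Finset.univ_nonempty p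
  set q := Finset.univ.sup' Finset.univ_nonempty p with hqdef
  have hqle : ∀ i, p i ≤ q := fun i => Finset.le_sup' p (Finset.mem_univ i)
  have hq1 : q ≤ 1 := by
    rw [hi₀, ← hs]
    exact Finset.single_le_sum (fun i _ => hp i) (Finset.mem_univ i₀)
  have hq0 : 0 < q := by
    by_contra h
    push_neg at h
    have : ∀ i, p i = 0 := fun i => le_antisymm ((hqle i).trans h) (hp i)
    simp [this] at hs
  rcases le_or_gt q (1/2) with hc | hc
  · -- small max case
    have hpt : ∀ i, p i * Real.logb 2 (p i) ≤ p i * Real.logb 2 q := by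
      intro i
      rcases eq_or_lt_of_le (hp i) with h0 | h0
      · simp [← h0]
      · exact mul_le_mul_of_nonneg_left
          (Real.logb_le_logb_of_le (by norm_num) h0 (hqle i)) (hp i)
    have hsum : ∑ i, p i * Real.logb 2 (p i) ≤ Real.logb 2 q := by
      calc ∑ i, p i * Real.logb 2 (p i) ≤ ∑ i, p i * Real.logb 2 q :=
            Finset.sum_le_sum fun i _ => hpt i
        _ = Real.logb 2 q := by rw [← Finset.sum_mul, hs, one_mul]
    have := lemB hq0 hc
    linarith
  · -- large max case
    have hsplit : ∑ i, p i = p i₀ + ∑ i ∈ Finset.univ.erase i₀, p i :=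
      (Finset.add_sum_erase _ p (Finset.mem_univ i₀)).symm
    have hrest : ∑ i ∈ Finset.univ.erase i₀, p i = 1 - q := by
      rw [hs, ← hi₀] at hsplit; linarith
    have hle : ∀ i ∈ Finset.univ.erase i₀, p i ≤ 1 - q := by
      intro i hi
      rw [← hrest]
      exact Finset.single_le_sum (fun j _ => hp j) hi
    have hpt : ∀ i ∈ Finset.univ.erase i₀,
        p i * Real.logb 2 (p i) ≤ p i * Real.logb 2 (1 - q) := by
      intro i hi
      rcases eq_or_lt_of_le (hp i) with h0 | h0
      · simp [← h0]
      · exact mul_le_mul_of_nonneg_left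
          (Real.logb_le_logb_of_le (by norm_num) h0 (hle i hi)) (hp i)
    have hsum : ∑ i, p i * Real.logb 2 (p i) ≤
        q * Real.logb 2 q + (1 - q) * Real.logb 2 (1 - q) := by
      rw [← Finset.add_sum_erase _ _ (Finset.mem_univ i₀), ← hi₀]
      have : ∑ i ∈ Finset.univ.erase i₀, p i * Real.logb 2 (p i) ≤
          (1 - q) * Real.logb 2 (1 - q) := by
        calc ∑ i ∈ Finset.univ.erase i₀, p i * Real.logb 2 (p i)
            ≤ ∑ i ∈ Finset.univ.erase i₀, p i * Real.logb 2 (1 - q) :=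
              Finset.sum_le_sum hpt
          _ = (1 - q) * Real.logb 2 (1 - q) := by rw [← Finset.sum_mul, hrest]
      linarith
    have := lemA' hc.le hq1
    linarith

private lemma pr_nonneg {Ω : Type*} [Fintype Ω] (μ : Ω → ℝ) (hμ0 : ∀ ω, 0 ≤ μ ω)
    (p : Ω → Prop) : 0 ≤ pr μ p := by
  classical
  exact Finset.sum_nonneg fun ω _ => by by_cases h : p ω <;> simp [pr, h, hμ0 ω]

open Classical in
theorem bayes_error_le_half_condEntropy
    {Ω 𝒴 γ : Type*} [Fintype Ω] [Fintype 𝒴] [Nonempty 𝒴] [Fintype γ]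
    (μ : Ω → ℝ) (hμ0 : ∀ ω, 0 ≤ μ ω) (hμ1 : ∑ ω, μ ω = 1)
    (y : Ω → 𝒴) (Z : Ω → γ) :
    ∑ z ∈ Finset.univ.filter (fun z : γ => 0 < pr μ (fun ω => Z ω = z)),
        pr μ (fun ω => Z ω = z) *
          (1 - Finset.univ.sup' Finset.univ_nonempty (fun i : 𝒴 =>
            pr μ (fun ω => y ω = i ∧ Z ω = z) / pr μ (fun ω => Z ω = z))) ≤
      (1 / 2) * condEntropy μ y Z := by
  classical
  have hf0 : ∀ z : γ, 0 ≤ pr μ (fun ω => Z ω = z) := fun z => pr_nonneg μ hμ0 _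
  have hsum_a : ∀ z : γ, ∑ i : 𝒴, pr μ (fun ω => y ω = i ∧ Z ω = z) =
      pr μ (fun ω => Z ω = z) := by
    intro z
    unfold pr
    rw [Finset.sum_comm]
    refine Finset.sum_congr rfl fun ω _ => ?_
    by_cases hz : Z ω = z
    · simp [hz]
    · simp [hz]
  set F : γ → ℝ := fun z => pr μ (fun ω => Z ω = z) *
      (-∑ a : 𝒴, pr μ (fun ω => y ω = a ∧ Z ω = z) / pr μ (fun ω => Z ω = z) *
        Real.logb 2 (pr μ (fun ω => y ω = a ∧ Z ω = z) / pr μ (fun ω => Z ω = z)))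
      with hF
  have hcond : condEntropy μ y Z = ∑ z ∈ Finset.univ.filter
      (fun z : γ => 0 < pr μ (fun ω => Z ω = z)), F z := by
    rw [condEntropy]
    refine (Finset.sum_subset (Finset.filter_subset _ _) fun z _ hz => ?_).symm
    have : pr μ (fun ω => Z ω = z) = 0 := by
      rcases (hf0 z).eq_or_lt with h | h
      · exact h.symm
      · exact absurd (Finset.mem_filter.mpr ⟨Finset.mem_univ z, h⟩) hz
    simp [this]
  rw [hcond, Finset.mul_sum]
  refine Finset.sum_le_sum fun z hz => ?_
  have hz' : 0 < pr μ (fun ω => Z ω = z) := (Finset.mem_filter.mp hz).2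
  set P : 𝒴 → ℝ := fun i => pr μ (fun ω => y ω = i ∧ Z ω = z) / pr μ (fun ω => Z ω = z)
    with hP
  have hp : ∀ i, 0 ≤ P i := fun i => div_nonneg (pr_nonneg μ hμ0 _) (hf0 z)
  have hs : ∑ i, P i = 1 := by
    rw [hP, ← Finset.sum_div, hsum_a z, div_self hz'.ne']
  have hk := key P hp hs
  have := mul_le_mul_of_nonneg_left hk (hf0 z)
  calc pr μ (fun ω => Z ω = z) * (1 - Finset.univ.sup' Finset.univ_nonempty P)
      ≤ pr μ (fun ω => Z ω = z) * ((1/2) * (-∑ i, P i * Real.logb 2 (P i))) := this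
    _ = 1 / 2 * F z := by rw [hF]; ring
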